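/- Let $f : \mathbb{R}^{d_x} \to \mathbb{R}^{d_\theta}$ satisfy the linearization bound $\| f(x) - f(x_u) - J(x - x_u) \|_2 \leq \mu_x \| x - x_u \|_2$ on a region of interest, where $J$ has smallest singular value $\sigma_{\min}(J) > 0$, i.e. $\| J w \|_2 \geq \sigma_{\min}(J) \| w \|_2$ for all $w$. Let $g : \mathbb{R}^{d_x} \to \mathbb{R}^{d_\theta}$ be $\mu_x$-Lipschitz, fix $x_r$, and suppose $\| \tilde{x}_r - x_r \|_2 \leq \epsilon$. Define the residual $R = (g(x_r) - g(\tilde{x}_r)) - (f(\tilde{x}_u) - f(x_u))$ and suppose $\| R \|_2 \le L^{1/2}$, where $L \ge 0$. Then $\| \tilde{x}_u - x_u \|_2 \leq \frac{\mu_x \epsilon + L^{1/2} + \mu_x \| \tilde{x}_u - x_u\|_2 }{\sigma_{\min}(J)}$; in particular, if $\sigma_{\min}(J) > \mu_x$, then $\| \tilde{x}_u - x_u \|_2 \leq \frac{\mu_x \epsilon + L^{1/2}}{\sigma_{\min}(J) - \mu_x}$. -/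
import Mathlib


/-- First-order DRAUN reconstruction upper bound. -/
theorem draun_first_order_reconstruction_bound
    (dx dθ : ℕ)
    (f g : EuclideanSpace ℝ (Fin dx) → EuclideanSpace ℝ (Fin dθ))
    (J : EuclideanSpace ℝ (Fin dx) →L[ℝ] EuclideanSpace ℝ (Fin dθ))
    (μx σmin ε L : ℝ) (hσ : 0 < σmin) (hμx : 0 ≤ μx) (hε : 0 ≤ ε) (hL : 0 ≤ L)
    (xu xtu xr xtr : EuclideanSpace ℝ (Fin dx))
    (hlin : ∀ x, ‖f x - f xu - J (x - xu)‖ ≤ μx * ‖x - xu‖)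
    (hJlower : ∀ w, σmin * ‖w‖ ≤ ‖J w‖)
    (hglip : ∀ a b, ‖g a - g b‖ ≤ μx * ‖a - b‖)
    (hprox : ‖xtr - xr‖ ≤ ε)
    (hres : ‖(g xr - g xtr) - (f xtu - f xu)‖ ≤ Real.sqrt L) :
    ‖xtu - xu‖ ≤ (μx * ε + Real.sqrt L + μx * ‖xtu - xu‖) / σmin ∧
      (μx < σmin → ‖xtu - xu‖ ≤ (μx * ε + Real.sqrt L) / (σmin - μx)) := by
  have hfg : ‖f xtu - f xu‖ ≤ μx * ε + Real.sqrt L := by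
    have h1 : ‖f xtu - f xu‖ ≤ ‖g xr - g xtr‖ + ‖(g xr - g xtr) - (f xtu - f xu)‖ := by
      have := norm_sub_le (g xr - g xtr) ((g xr - g xtr) - (f xtu - f xu))
      simpa using this
    have h2 : ‖g xr - g xtr‖ ≤ μx * ε :=
      le_trans (hglip xr xtr) (by
        have : ‖xr - xtr‖ ≤ ε := by rwa [norm_sub_rev]
        nlinarith)
    linarith
  have hJ : ‖J (xtu - xu)‖ ≤ μx * ‖xtu - xu‖ + (μx * ε + Real.sqrt L) := by
    have h1 : ‖J (xtu - xu)‖ ≤ ‖f xtu - f xu - J (xtu - xu)‖ + ‖f xtu - f xu‖ := by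
      have := norm_sub_le (f xtu - f xu - J (xtu - xu)) (f xtu - f xu)
      rw [norm_sub_rev] at this
      simpa using this
    have := hlin xtu
    linarith
  have hmain : σmin * ‖xtu - xu‖ ≤ μx * ε + Real.sqrt L + μx * ‖xtu - xu‖ := by
    have := hJlower (xtu - xu)
    linarith
  constructor
  · rw [le_div_iff₀ hσ]; linarith [hmain]
  · intro hlt
    rw [le_div_iff₀ (by linarith : (0:ℝ) < σmin - μx)]
    nlinarith
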